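/- Let A be a unital C*-algebra with stable rank one and let a, d ∈ A with 0 ≤ a ≤ 1 and 0 ≤ d ≤ 1. Suppose there exist b, c ∈ A with 0 ≤ b ≤ 1 and 0 ≤ c ≤ 1 such that ab = a, b ≾ c, and dc = c. Then 1 − d ≾ 1 − a. -/

import Mathlib

open scoped ENNReal
open Metric Set
open scoped ComplexOrder

/-- Cuntz subequivalence of elements of a C*-algebra. -/
def CuntzLE {A : Type*} [CStarAlgebra A] (a b : A) : Prop :=
  ∃ x : ℕ → A,
    Filter.Tendsto (fun n => ‖star (x n) * b * x n - a‖) Filter.atTop (nhds 0)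

/-- Cuntz equivalence. -/
def CuntzEquiv {A : Type*} [CStarAlgebra A] (a b : A) : Prop :=
  CuntzLE a b ∧ CuntzLE b a

/-- A unital C*-algebra has stable rank one if invertibles are dense. -/
def HasStableRankOne (A : Type*) [CStarAlgebra A] : Prop :=
  Dense {a : A | IsUnit a}

/-- A C*-algebra is simple if its only closed two-sided ideals are trivial. -/
def IsSimpleCStarAlgebra (A : Type*) [CStarAlgebra A] : Prop :=
  ∀ I : TwoSidedIdeal A, IsClosed (I : Set A) → I = ⊥ ∨ I = ⊤

/-- The canonical continuous `[0,1]`-valued function supported exactly on the open set `O`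
(equal to `1` when `O` is the whole space). -/
noncomputable def fO {Ω : Type*} [MetricSpace Ω] (O : Set Ω) : C(Ω, ℂ) :=
  haveI := Classical.dec (O = Set.univ)
  if O = Set.univ then 1 else
    ⟨fun t => (↑(min 1 (infDist t Oᶜ)) : ℂ),
      Complex.continuous_ofReal.comp
        (continuous_const.min (continuous_infDist_pt Oᶜ))⟩

/-- The distance `D_c` between two unital homomorphisms `C(Ω) → A`. -/
noncomputable def Dc {A : Type*} [CStarAlgebra A] {Ω : Type*} [MetricSpace Ω]
    (φ ψ : C(Ω, ℂ) →⋆ₐ[ℂ] A) : ℝ≥0∞ :=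
  ⨆ (O : Set Ω) (_ : IsOpen O),
    ⨅ (d : ℝ) (_ : 0 < d)
      (_ : CuntzLE (φ (fO O)) (ψ (fO (thickening d O)))), ENNReal.ofReal d

/-- Tracial states, as linear functionals. -/
structure IsTracialState {A : Type*} [CStarAlgebra A] (τ : A →ₗ[ℂ] ℂ) : Prop where
  map_one : τ 1 = 1
  nonneg : ∀ a : A, 0 ≤ τ (star a * a)
  tracial : ∀ a b : A, τ (a * b) = τ (b * a)

/-- The function `f_ε` used in the definition of `d_τ`. -/
noncomputable def cutoff (ε : ℝ) : ℝ → ℝ := fun t => min 1 (max ((2 / ε) * t - 1) 0)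

/-- `d_τ(b) = lim_{ε → 0⁺} τ(f_ε(b)) = sup_{ε > 0} τ(f_ε(b))`. -/
noncomputable def dTau {A : Type*} [CStarAlgebra A] (τ : A →ₗ[ℂ] ℂ) (b : A) : ℝ :=
  ⨆ ε : {ε : ℝ // 0 < ε}, (τ (cfc (cutoff ε.1) b)).re

/-- Strict comparison for positive elements. -/
def StrictComparison (A : Type*) [CStarAlgebra A] [PartialOrder A] [StarOrderedRing A] : Prop :=
  ∀ a b : A, 0 ≤ a → 0 ≤ b →
    (∀ τ : A →ₗ[ℂ] ℂ, IsTracialState τ → dTau τ a < dTau τ b) → CuntzLE a b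

/-- A unital homomorphism `C(Ω) → A` has spectrum `X`. -/
def HomSpectrum {A : Type*} [CStarAlgebra A] {Ω : Type*} [MetricSpace Ω]
    (φ : C(Ω, ℂ) →⋆ₐ[ℂ] A) (X : Set Ω) : Prop :=
  ∀ f : C(Ω, ℂ), φ f = 0 ↔ ∀ t ∈ X, f t = 0

section dist
variable {A : Type*} [CStarAlgebra A] {Ω : Type*} [MetricSpace Ω]

/-- `r_O(φ, ψ)`. -/
noncomputable def rOfun (φ ψ : C(Ω, ℂ) →⋆ₐ[ℂ] A) (O : Set Ω) : ℝ≥0∞ :=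
  ⨅ (r : ℝ) (_ : 0 < r)
    (_ : ∀ τ : A →ₗ[ℂ] ℂ, IsTracialState τ →
      dTau τ (φ (fO O)) ≤ dTau τ (ψ (fO (thickening r O)))), ENNReal.ofReal r

/-- `D_T(φ, ψ)`. -/
noncomputable def DT (φ ψ : C(Ω, ℂ) →⋆ₐ[ℂ] A) : ℝ≥0∞ :=
  ⨆ (O : Set Ω) (_ : IsOpen O), rOfun φ ψ O

/-- `r_O⁺(φ, ψ)`. -/
noncomputable def rOplus (φ ψ : C(Ω, ℂ) →⋆ₐ[ℂ] A) (O : Set Ω) : ℝ≥0∞ :=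
  ⨅ (r : ℝ) (_ : 0 < r)
    (_ : ∀ τ : A →ₗ[ℂ] ℂ, IsTracialState τ →
      dTau τ (φ (fO O)) < dTau τ (ψ (fO (thickening r O)))), ENNReal.ofReal r

/-- `a(φ, ψ) = sup {dist(ζ, X) : ζ ∈ Y}`. -/
noncomputable def aSup (X Y : Set Ω) : ℝ≥0∞ :=
  ⨆ ζ ∈ Y, ENNReal.ofReal (infDist ζ X)

/-- `D^T(φ, ψ)`, where `X`, `Y` are the spectra of `φ`, `ψ`. -/
noncomputable def DTup (φ ψ : C(Ω, ℂ) →⋆ₐ[ℂ] A) (X Y : Set Ω) : ℝ≥0∞ :=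
  max (aSup X Y) (⨆ (O : Set Ω) (_ : IsOpen O) (_ : O ∩ X ≠ X), rOplus φ ψ O)

/-- `δ_T(φ, ψ)` (over open metric balls). -/
noncomputable def deltaT (φ ψ : C(Ω, ℂ) →⋆ₐ[ℂ] A) : ℝ≥0∞ :=
  ⨅ (r : ℝ) (_ : 0 < r)
    (_ : ∀ (c : Ω) (d : ℝ) (τ : A →ₗ[ℂ] ℂ), IsTracialState τ →
      dTau τ (φ (fO (ball c d))) ≤ dTau τ (ψ (fO (thickening r (ball c d))))),
    ENNReal.ofReal r

/-- `d_T(φ, ψ)`. -/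
noncomputable def dTdist (φ ψ : C(Ω, ℂ) →⋆ₐ[ℂ] A) : ℝ≥0∞ :=
  max (deltaT φ ψ) (deltaT ψ φ)

/-- `δ_c(φ, ψ)` (over open metric balls). -/
noncomputable def deltaC (φ ψ : C(Ω, ℂ) →⋆ₐ[ℂ] A) : ℝ≥0∞ :=
  ⨅ (r : ℝ) (_ : 0 < r)
    (_ : ∀ (c : Ω) (d : ℝ),
      CuntzLE (φ (fO (ball c d))) (ψ (fO (thickening r (ball c d))))),
    ENNReal.ofReal r

/-- `d_c(φ, ψ)`. -/
noncomputable def dCdist (φ ψ : C(Ω, ℂ) →⋆ₐ[ℂ] A) : ℝ≥0∞ :=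
  max (deltaC φ ψ) (deltaC ψ φ)

end dist

section normal
variable {A : Type*} [CStarAlgebra A]

/-- The closure of the unitary orbit of `x`. -/
def uOrbit (x : A) : Set A :=
  closure {y : A | ∃ u : unitary A, y = star (u : A) * x * (u : A)}

/-- The distance between the closures of the unitary orbits of `x` and `y`. -/
noncomputable def orbitDist (x y : A) : ℝ :=
  sInf {d : ℝ | ∃ a ∈ uOrbit x, ∃ b ∈ uOrbit y, d = ‖a - b‖}

/-- The homomorphism `C(sp(x) ∪ sp(y)) → A`, `f ↦ f(x)`, for a normal element `x`. -/
noncomputable def normalHomL (x y : A) (hx : IsStarNormal x) :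
    C((spectrum ℂ x ∪ spectrum ℂ y : Set ℂ), ℂ) →⋆ₐ[ℂ] A :=
  cfcHomSuperset hx Set.subset_union_left

/-- The homomorphism `C(sp(x) ∪ sp(y)) → A`, `f ↦ f(y)`, for a normal element `y`. -/
noncomputable def normalHomR (x y : A) (hy : IsStarNormal y) :
    C((spectrum ℂ x ∪ spectrum ℂ y : Set ℂ), ℂ) →⋆ₐ[ℂ] A :=
  cfcHomSuperset hy Set.subset_union_right

/-- Projections. -/
def IsProjection (p : A) : Prop := IsSelfAdjoint p ∧ IsIdempotentElem p

/-- Murray–von Neumann equivalence. -/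
def MvNEquiv (p q : A) : Prop := ∃ v : A, star v * v = p ∧ v * star v = q

/-- The hereditary C*-subalgebra generated by `a`, as a set. -/
def herGen (a : A) : Set A := closure {x : A | ∃ y : A, x = a * y * a}

/-- Connected component of `1` in the invertibles. -/
def Inv0 (A : Type*) [CStarAlgebra A] : Set A :=
  connectedComponentIn {a : A | IsUnit a} 1

end normal

/-- AF algebra. -/
def IsAF (A : Type*) [CStarAlgebra A] : Prop :=
  ∀ (F : Finset A) (ε : ℝ), 0 < ε →
    ∃ B : StarSubalgebra ℂ A, FiniteDimensional ℂ B ∧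
      ∀ a ∈ F, infDist a (B : Set A) < ε

/-- Tracial rank zero. -/
def TracialRankZero (A : Type*) [CStarAlgebra A] [PartialOrder A] [StarOrderedRing A] : Prop :=
  ∀ (ε : ℝ), 0 < ε → ∀ (F : Finset A) (a : A), 0 ≤ a → a ≠ 0 →
    ∃ (B : StarSubalgebra ℂ A) (p : A),
      FiniteDimensional ℂ B ∧ IsProjection p ∧ p ∈ B ∧
      (∀ b ∈ B, p * b = b ∧ b * p = b) ∧
      (∀ c ∈ F, ‖p * c - c * p‖ < ε ∧ infDist (p * c * p) (B : Set A) < ε) ∧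
      ∃ q : A, IsProjection q ∧ q ∈ herGen a ∧ MvNEquiv (1 - p) q

/-- `ρ₁(x, y)`. -/
noncomputable def rho1 {A : Type*} [CStarAlgebra A] (x y : A) : ℝ :=
  sSup {r : ℝ | ∃ lam : ℂ, lam ∉ spectrum ℂ x ∪ spectrum ℂ y ∧
    (algebraMap ℂ A lam - x) * Ring.inverse (algebraMap ℂ A lam - y) ∉ Inv0 A ∧
    r = infDist lam (spectrum ℂ x) + infDist lam (spectrum ℂ y)}



section aux
variable {A : Type*} [CStarAlgebra A] [PartialOrder A] [StarOrderedRing A]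

/-- If `w * (v * star v) = 0` then `w * v = 0`. -/
lemma aux_mul_eq_zero (w v : A) (h : w * (v * star v) = 0) : w * v = 0 := by
  have h1 : (w * v) * star (w * v) = 0 := by
    rw [star_mul, show w * v * (star v * star w) = (w * (v * star v)) * star w by
      simp only [mul_assoc], h, zero_mul]
  have h2 : ‖w * v‖ * ‖w * v‖ = 0 := by
    rw [← CStarRing.norm_self_mul_star, h1, norm_zero]
  have := mul_self_eq_zero.mp h2
  rwa [norm_eq_zero] at this

/-- From an invertible `z`, produce a unitary `u` with `u (z*z) = (zz*) u`. -/
lemma aux_unitary (z : A) (hz : IsUnit z) :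
    ∃ u : A, star u * u = 1 ∧ u * star u = 1 ∧
      u * (star z * z) = (z * star z) * u := by
  set h : A := star z * z with hdef
  have hh0 : 0 ≤ h := star_mul_self_nonneg z
  have hhsa : IsSelfAdjoint h := hh0.isSelfAdjoint
  have hhu : IsUnit h := hz.star.mul hz
  have hspec : ∀ r ∈ spectrum ℝ h, 0 < r := by
    intro r hr
    have hr0 : 0 ≤ r := spectrum_nonneg_of_nonneg hh0 hr
    rcases hr0.lt_or_eq with h' | h'
    · exact h'
    · exact absurd hhu (by rw [← h'] at hr; exact (spectrum.zero_mem_iff (R := ℝ)).mp hr)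
  set f : ℝ → ℝ := fun r => (Real.sqrt r)⁻¹ with hfdef
  have hfc : ContinuousOn f (spectrum ℝ h) := by
    apply ContinuousOn.inv₀ (Real.continuous_sqrt.continuousOn)
    exact fun r hr => (Real.sqrt_pos.mpr (hspec r hr)).ne'
  set k : A := cfc f h with hkdef
  have hksa : IsSelfAdjoint k := cfc_predicate f h
  have hidc : ContinuousOn (fun r : ℝ => r) (spectrum ℝ h) := continuousOn_id
  have hk_h : k * h = cfc (fun r : ℝ => f r * r) h := by
    rw [cfc_mul f _ h hfc hidc, cfc_id' ℝ h]
  have hh_k : h * k = cfc (fun r : ℝ => r * f r) h := by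
    rw [cfc_mul _ f h hidc hfc, cfc_id' ℝ h]
  have hcomm : k * h = h * k := by
    rw [hk_h, hh_k]; exact cfc_congr fun r _ => mul_comm _ _
  have hfrf : ∀ r ∈ spectrum ℝ h, f r * (r * f r) = 1 := by
    intro r hr
    have hrpos := hspec r hr
    have hs : Real.sqrt r * Real.sqrt r = r := Real.mul_self_sqrt hrpos.le
    have hne : Real.sqrt r ≠ 0 := (Real.sqrt_pos.mpr hrpos).ne'
    simp only [hfdef]
    field_simp
    rw [Real.sq_sqrt hrpos.le]
  have hkhk : k * (h * k) = 1 := by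
    rw [hh_k, hkdef, ← cfc_mul f (fun r => r * f r) h hfc (hidc.mul hfc)]
    rw [cfc_congr hfrf, cfc_const_one ℝ h]
  have hhkk : (h * k) * k = 1 := by
    rw [← hcomm, mul_assoc]
    exact hkhk
  have hku : IsUnit k := ⟨⟨k, h * k, hkhk, hhkk⟩, rfl⟩
  refine ⟨z * k, ?_, ?_, ?_⟩
  · rw [star_mul, hksa.star_eq]
    calc k * star z * (z * k) = k * (h * k) := by rw [hdef]; simp only [mul_assoc]
    _ = 1 := hkhk
  · have huu : IsUnit (z * k) := hz.mul hku
    have hleft : star (z * k) * (z * k) = 1 := by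
      rw [star_mul, hksa.star_eq]
      calc k * star z * (z * k) = k * (h * k) := by rw [hdef]; simp only [mul_assoc]
      _ = 1 := hkhk
    have hstar : star (z * k) = ↑huu.unit⁻¹ := by
      have h1 : star (z * k) * (z * k) * ↑huu.unit⁻¹ = ↑huu.unit⁻¹ := by
        rw [hleft, one_mul]
      rwa [mul_assoc, show (z * k) * (↑huu.unit⁻¹ : A) = 1 from huu.mul_val_inv, mul_one] at h1
    rw [hstar]
    exact huu.mul_val_inv
  · calc z * k * (star z * z) = z * (k * h) := by rw [hdef]; simp only [mul_assoc]
    _ = z * (h * k) := by rw [hcomm]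
    _ = (z * star z) * (z * k) := by rw [hdef]; simp only [mul_assoc]

end aux

section key
variable {A : Type*} [CStarAlgebra A] [PartialOrder A] [StarOrderedRing A]

set_option maxHeartbeats 2000000 in
lemma aux_key (hsr : Dense {a : A | IsUnit a}) (a d : A)
    (ha0 : 0 ≤ a) (ha1 : a ≤ 1) (hd0 : 0 ≤ d) (hd1 : d ≤ 1)
    (b c : A) (hc0 : 0 ≤ c)
    (hab : a * b = a)
    (hbc : ∃ x : ℕ → A,
      Filter.Tendsto (fun n => ‖star (x n) * c * x n - b‖) Filter.atTop (nhds 0))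
    (hdc : d * c = c) {ε : ℝ} (hε : 0 < ε) :
    ∃ y : A, ‖star y * (1 - a) * y - (1 - d)‖ < ε := by
  rcases subsingleton_or_nontrivial A with hS | hS
  · exact ⟨0, by rw [Subsingleton.elim (star (0 : A) * (1 - a) * 0 - (1 - d)) 0, norm_zero]; exact hε⟩
  have hna : ‖a‖ ≤ 1 := (CStarAlgebra.norm_le_one_iff_of_nonneg a ha0).mpr ha1
  have hd0' : (0 : A) ≤ 1 - d := sub_nonneg.mpr hd1
  have hd1' : (1 : A) - d ≤ 1 := sub_le_self _ hd0
  have hnd : ‖(1 : A) - d‖ ≤ 1 := (CStarAlgebra.norm_le_one_iff_of_nonneg _ hd0').mpr hd1'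
  have hdc0 : (1 - d) * c = 0 := by rw [sub_mul, one_mul, hdc, sub_self]
  have hsqsa : IsSelfAdjoint (CFC.sqrt c) := IsSelfAdjoint.of_nonneg (CFC.sqrt_nonneg c)
  have hsqc : CFC.sqrt c * star (CFC.sqrt c) = c := by
    rw [hsqsa.star_eq, CFC.sqrt_mul_sqrt_self c hc0]
  have hdsq : (1 - d) * CFC.sqrt c = 0 :=
    aux_mul_eq_zero (1 - d) (CFC.sqrt c) (by rw [hsqc, hdc0])
  have hsqd : CFC.sqrt c * (1 - d) = 0 := by
    have h1 := congrArg star hdsq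
    rwa [star_mul, hsqsa.star_eq, (IsSelfAdjoint.of_nonneg hd0').star_eq, star_zero] at h1
  -- pick x
  obtain ⟨w, hw⟩ := hbc
  have hev : ∀ᶠ n in Filter.atTop, ‖star (w n) * c * w n - b‖ < ε ^ 2 / 4 :=
    hw.eventually (eventually_lt_nhds (by positivity))
  obtain ⟨n, hn⟩ := hev.exists
  set x := w n with hxdef
  clear_value x
  set t := CFC.sqrt c * x with htdef
  clear_value t
  have htt : star t * t = star x * c * x := by
    rw [htdef, star_mul, hsqsa.star_eq]
    calc star x * CFC.sqrt c * (CFC.sqrt c * x)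
        = star x * (CFC.sqrt c * CFC.sqrt c) * x := by simp only [mul_assoc]
      _ = star x * c * x := by rw [CFC.sqrt_mul_sqrt_self c hc0]
  have hbt : ‖star t * t - b‖ < ε ^ 2 / 4 := by rw [htt]; exact hn
  -- pick invertible z near t
  set η := min 1 (ε ^ 2 / (4 * (2 * ‖t‖ + 1))) with hηdef
  have hηpos : 0 < η := lt_min one_pos (by positivity)
  have hη1 : η ≤ 1 := min_le_left _ _
  obtain ⟨z, hz, hdist⟩ := Metric.mem_closure_iff.mp (hsr t) η hηpos
  have htz : ‖t - z‖ < η := by rwa [dist_eq_norm] at hdist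
  have hnz : ‖z‖ ≤ ‖t‖ + 1 := by
    calc ‖z‖ = ‖t - (t - z)‖ := by rw [sub_sub_cancel]
      _ ≤ ‖t‖ + ‖t - z‖ := norm_sub_le _ _
      _ ≤ ‖t‖ + 1 := by linarith [htz.le.trans hη1]
  have h2t : (0 : ℝ) < 2 * ‖t‖ + 1 := by positivity
  have hηb : η * (2 * ‖t‖ + 1) ≤ ε ^ 2 / 4 := by
    calc η * (2 * ‖t‖ + 1) ≤ ε ^ 2 / (4 * (2 * ‖t‖ + 1)) * (2 * ‖t‖ + 1) := by
          gcongr; exact min_le_right _ _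
      _ = ε ^ 2 / 4 := by field_simp
  have bound1 : ‖star t * t - star z * z‖ ≤ ε ^ 2 / 4 := by
    have hsplit : star t * t - star z * z = star t * (t - z) + (star t - star z) * z := by
      noncomm_ring
    rw [hsplit]
    have n1 : ‖star t * (t - z)‖ ≤ ‖t‖ * ‖t - z‖ := by
      simpa [norm_star] using norm_mul_le (star t) (t - z)
    have n2 : ‖(star t - star z) * z‖ ≤ ‖t - z‖ * ‖z‖ := by
      have h3 := norm_mul_le (star (t - z)) z
      rwa [norm_star, star_sub] at h3
    have := norm_add_le (star t * (t - z)) ((star t - star z) * z)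
    nlinarith [norm_nonneg (t - z), norm_nonneg t, norm_nonneg z, htz.le]
  have bound2 : ‖t * star t - z * star z‖ ≤ ε ^ 2 / 4 := by
    have hsplit : t * star t - z * star z = t * (star t - star z) + (t - z) * star z := by
      noncomm_ring
    rw [hsplit]
    have n1 : ‖t * (star t - star z)‖ ≤ ‖t‖ * ‖t - z‖ := by
      have h3 := norm_mul_le t (star (t - z))
      rwa [norm_star, star_sub] at h3
    have n2 : ‖(t - z) * star z‖ ≤ ‖t - z‖ * ‖z‖ := by
      simpa [norm_star] using norm_mul_le (t - z) (star z)
    have := norm_add_le (t * (star t - star z)) ((t - z) * star z)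
    nlinarith [norm_nonneg (t - z), norm_nonneg t, norm_nonneg z, htz.le]
  -- unitary
  obtain ⟨u, hu1, hu2, hcomm⟩ := aux_unitary z hz
  have hucomm : star z * z * star u = star u * (z * star z) := by
    have h1 := congrArg star hcomm
    simp only [star_mul, star_star] at h1
    simpa only [mul_assoc] using h1
  have hnu : ‖u‖ = 1 := by
    have h1 : ‖u‖ * ‖u‖ = 1 := by rw [← CStarRing.norm_star_mul_self, hu1, norm_one]
    nlinarith [norm_nonneg u]
  have ttd : (t * star t) * (1 - d) = 0 := by
    rw [htdef, star_mul, hsqsa.star_eq]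
    calc CFC.sqrt c * x * (star x * CFC.sqrt c) * (1 - d)
        = CFC.sqrt c * (x * (star x * (CFC.sqrt c * (1 - d)))) := by simp only [mul_assoc]
      _ = 0 := by rw [hsqd]; simp
  -- key identity
  have e1 : a * star u * (1 - d)
      = a * (b - star z * z) * (star u * (1 - d))
        + a * star u * ((z * star z - t * star t) * (1 - d)) := by
    have mid : a * (star z * z) * (star u * (1 - d))
        = a * star u * ((z * star z) * (1 - d)) := by
      calc a * (star z * z) * (star u * (1 - d))
          = a * ((star z * z * star u) * (1 - d)) := by simp only [mul_assoc]
        _ = a * ((star u * (z * star z)) * (1 - d)) := by rw [hucomm]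
        _ = a * star u * ((z * star z) * (1 - d)) := by simp only [mul_assoc]
    have last : (z * star z - t * star t) * (1 - d) = (z * star z) * (1 - d) := by
      rw [sub_mul, ttd, sub_zero]
    rw [last, ← mid]
    calc a * star u * (1 - d) = a * b * (star u * (1 - d)) := by rw [hab, mul_assoc]
      _ = a * (b - star z * z) * (star u * (1 - d))
          + a * (star z * z) * (star u * (1 - d)) := by noncomm_ring
  -- norm of a * star u * (1 - d)
  have hβ : ‖a * star u * (1 - d)‖ < ε ^ 2 := by
    rw [e1]
    have hbz : ‖b - star z * z‖ < ε ^ 2 / 2 := by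
      have h4 : ‖b - star t * t‖ < ε ^ 2 / 4 := by rwa [norm_sub_rev] at hbt
      calc ‖b - star z * z‖ = ‖(b - star t * t) + (star t * t - star z * z)‖ := by
            rw [sub_add_sub_cancel]
        _ ≤ ‖b - star t * t‖ + ‖star t * t - star z * z‖ := norm_add_le _ _
        _ < ε ^ 2 / 2 := by linarith
    have hzt : ‖z * star z - t * star t‖ ≤ ε ^ 2 / 4 := by rwa [norm_sub_rev] at bound2
    have b1 : ‖a * (b - star z * z) * (star u * (1 - d))‖ ≤ ‖b - star z * z‖ := by
      have h5 := norm_mul_le (a * (b - star z * z)) (star u * (1 - d))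
      have h6 := norm_mul_le a (b - star z * z)
      have h7 := norm_mul_le (star u) (1 - d)
      rw [norm_star, hnu, one_mul] at h7
      nlinarith [norm_nonneg (b - star z * z), norm_nonneg (star u * (1 - d)),
        norm_nonneg (a * (b - star z * z)), norm_nonneg ((1 : A) - d)]
    have b2 : ‖a * star u * ((z * star z - t * star t) * (1 - d))‖
        ≤ ‖z * star z - t * star t‖ := by
      have h5 := norm_mul_le (a * star u) ((z * star z - t * star t) * (1 - d))
      have h6 := norm_mul_le a (star u)
      rw [norm_star, hnu, mul_one] at h6
      have h7 := norm_mul_le (z * star z - t * star t) (1 - d)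
      nlinarith [norm_nonneg (z * star z - t * star t), norm_nonneg (a * star u),
        norm_nonneg ((z * star z - t * star t) * (1 - d)), norm_nonneg ((1 : A) - d)]
    calc ‖a * (b - star z * z) * (star u * (1 - d))
          + a * star u * ((z * star z - t * star t) * (1 - d))‖
        ≤ ‖a * (b - star z * z) * (star u * (1 - d))‖
          + ‖a * star u * ((z * star z - t * star t) * (1 - d))‖ := norm_add_le _ _
      _ < ε ^ 2 := by nlinarith
  -- conclude
  set s := CFC.sqrt (1 - d) with hsdef
  clear_value s
  have hssa : IsSelfAdjoint s := by
    rw [hsdef]; exact IsSelfAdjoint.of_nonneg (CFC.sqrt_nonneg _)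
  have hss : s * s = 1 - d := by
    rw [hsdef]; exact CFC.sqrt_mul_sqrt_self _ hd0'
  have hns : ‖s‖ ≤ 1 := by
    have h8 : ‖s‖ * ‖s‖ = ‖(1 : A) - d‖ := by
      rw [← CStarRing.norm_star_mul_self, hssa.star_eq, hss]
    nlinarith [norm_nonneg s]
  refine ⟨star u * s, ?_⟩
  have hysty : star (star u * s) = s * u := by rw [star_mul, hssa.star_eq, star_star]
  have e2 : star (star u * s) * (1 - a) * (star u * s) - (1 - d)
      = -(s * u * (a * (star u * s))) := by
    rw [hysty]
    have h9 : s * u * (1 - a) * (star u * s)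
        = s * (u * star u) * s - s * u * (a * (star u * s)) := by noncomm_ring
    rw [h9, hu2, mul_one, hss]
    abel
  rw [e2, norm_neg]
  set q := a * (star u * s) with hqdef
  have hqs : star q = s * (u * a) := by
    rw [hqdef, star_mul, star_mul, star_star, hssa.star_eq,
      (IsSelfAdjoint.of_nonneg ha0).star_eq, mul_assoc]
  have hq2 : q * star q = a * star u * (1 - d) * (u * a) := by
    rw [hqs, hqdef]
    calc a * (star u * s) * (s * (u * a))
        = a * star u * (s * s) * (u * a) := by simp only [mul_assoc]
      _ = a * star u * (1 - d) * (u * a) := by rw [hss]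
  have hnua : ‖u * a‖ ≤ 1 := by
    have := norm_mul_le u a
    nlinarith [norm_nonneg a]
  have hnq2 : ‖q * star q‖ < ε ^ 2 := by
    rw [hq2]
    have h10 := norm_mul_le (a * star u * (1 - d)) (u * a)
    nlinarith [norm_nonneg (a * star u * (1 - d)), norm_nonneg (u * a)]
  have hnq : ‖q‖ < ε := by
    have h11 : ‖q‖ * ‖q‖ < ε ^ 2 := by rwa [← CStarRing.norm_self_mul_star]
    nlinarith [norm_nonneg q]
  calc ‖s * u * q‖ ≤ ‖s * u‖ * ‖q‖ := norm_mul_le _ _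
    _ ≤ 1 * ‖q‖ := by
        have hsu : ‖s * u‖ ≤ 1 := by
          have h12 := norm_mul_le s u
          rw [hnu, mul_one] at h12
          linarith
        exact mul_le_mul_of_nonneg_right hsu (norm_nonneg q)
    _ < ε := by linarith
end key

theorem stmt_0 {A : Type*} [CStarAlgebra A] [PartialOrder A] [StarOrderedRing A]
    (hsr : HasStableRankOne A) (a d : A)
    (ha0 : 0 ≤ a) (ha1 : a ≤ 1) (hd0 : 0 ≤ d) (hd1 : d ≤ 1)
    (b c : A) (hb0 : 0 ≤ b) (hb1 : b ≤ 1) (hc0 : 0 ≤ c) (hc1 : c ≤ 1)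
    (hab : a * b = a) (hbc : CuntzLE b c) (hdc : d * c = c) :
    CuntzLE (1 - d) (1 - a) := by
  have hsr' : Dense {a : A | IsUnit a} := hsr
  obtain ⟨w, hw⟩ := hbc
  choose y hy using fun n : ℕ =>
    aux_key hsr' a d ha0 ha1 hd0 hd1 b c hc0 hab ⟨w, hw⟩ hdc
      (show (0 : ℝ) < 1 / (n + 1) by positivity)
  exact ⟨y, squeeze_zero (fun n => norm_nonneg _) (fun n => (hy n).le)
    tendsto_one_div_add_atTop_nhds_zero_nat⟩
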